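/- If a group G contains a central subgroup Z such that G/Z is locally finite, then the derived subgroup [G,G] is locally finite. -/

import Mathlib

open scoped commutatorElement

private lemma exists_finset_closure {G : Type*} [Group G] {S : Set G} {x : G}
    (hx : x ∈ Subgroup.closure S) :
    ∃ F : Finset G, ↑F ⊆ S ∧ x ∈ Subgroup.closure (F : Set G) := by
  classical
  induction hx using Subgroup.closure_induction with
  | mem y hy =>
      exact ⟨{y}, by simpa using hy, Subgroup.subset_closure (by simp)⟩
  | one => exact ⟨∅, by simp, one_mem _⟩
  | mul a b _ _ ha hb =>
      obtain ⟨F1, hF1, h1⟩ := ha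
      obtain ⟨F2, hF2, h2⟩ := hb
      refine ⟨F1 ∪ F2, ?_, mul_mem (Subgroup.closure_mono ?_ h1)
        (Subgroup.closure_mono ?_ h2)⟩
      · intro g hg
        rcases Finset.mem_union.mp (by exact_mod_cast hg) with h | h
        · exact hF1 h
        · exact hF2 h
      · exact Finset.coe_subset.mpr Finset.subset_union_left
      · exact Finset.coe_subset.mpr Finset.subset_union_right
  | inv a _ ha =>
      obtain ⟨F, hF, h⟩ := ha
      exact ⟨F, hF, inv_mem h⟩

private lemma commutator_mul_right_central {G : Type*} [Group G] {z : G}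
    (hz : z ∈ Subgroup.center G) (x b : G) : ⁅x * z, b⁆ = ⁅x, b⁆ := by
  have hzb : z * b * z⁻¹ = b := by
    rw [(Subgroup.mem_center_iff.mp hz b).symm]
    group
  have : ⁅x * z, b⁆ = x * (z * b * z⁻¹) * x⁻¹ * b⁻¹ := by
    simp only [commutatorElement_def]
    group
  rw [this, hzb, commutatorElement_def]

private lemma commutator_mul_right_central' {G : Type*} [Group G] {w : G}
    (hw : w ∈ Subgroup.center G) (a y : G) : ⁅a, y * w⁆ = ⁅a, y⁆ := by
  have hwa : w * a⁻¹ * w⁻¹ = a⁻¹ := by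
    rw [(Subgroup.mem_center_iff.mp hw a⁻¹).symm]
    group
  have : ⁅a, y * w⁆ = a * y * (w * a⁻¹ * w⁻¹) * y⁻¹ := by
    simp only [commutatorElement_def]
    group
  rw [this, hwa, commutatorElement_def]

/-- Commutators only depend on cosets modulo the center. -/
private lemma commutator_eq_of_central {G : Type*} [Group G] {z w : G}
    (hz : z ∈ Subgroup.center G) (hw : w ∈ Subgroup.center G) (x y : G) :
    ⁅x * z, y * w⁆ = ⁅x, y⁆ := by
  rw [commutator_mul_right_central hz, commutator_mul_right_central' hw]

/-- If the quotient by the center is finite, the commutator set is finite. -/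
private lemma finite_commutatorSet_of_finite_quotient_center (G : Type*) [Group G]
    [Finite (G ⧸ Subgroup.center G)] : Finite (commutatorSet G) := by
  classical
  set Q := G ⧸ Subgroup.center G
  have hsub : commutatorSet G ⊆
      Set.range (fun p : Q × Q => ⁅Quotient.out p.1, Quotient.out p.2⁆) := by
    rintro g ⟨a, b, rfl⟩
    refine ⟨(QuotientGroup.mk a, QuotientGroup.mk b), ?_⟩
    have ha : (Quotient.out (QuotientGroup.mk a : Q))⁻¹ * a ∈ Subgroup.center G := by
      rw [← QuotientGroup.eq]
      simp [QuotientGroup.out_eq']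
    have hb : (Quotient.out (QuotientGroup.mk b : Q))⁻¹ * b ∈ Subgroup.center G := by
      rw [← QuotientGroup.eq]
      simp [QuotientGroup.out_eq']
    have h1 : a = Quotient.out (QuotientGroup.mk a : Q) *
        ((Quotient.out (QuotientGroup.mk a : Q))⁻¹ * a) := by group
    have h2 : b = Quotient.out (QuotientGroup.mk b : Q) *
        ((Quotient.out (QuotientGroup.mk b : Q))⁻¹ * b) := by group
    conv_rhs => rw [h1, h2]
    exact (commutator_eq_of_central ha hb _ _).symm
  exact Set.Finite.to_subtype ((Set.finite_range _).subset hsub)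

/-- Local version of Schur's theorem: if `G` has a central subgroup `Z` such that the
quotient `G/Z` is locally finite (every finitely generated subgroup of `G` has only
finitely many cosets modulo `Z`), then the derived subgroup of `G` is locally finite. -/
theorem schur_local {G : Type*} [Group G] (Z : Subgroup G)
    (hZ : Z ≤ Subgroup.center G)
    (hquot : ∀ H : Subgroup G, H.FG →
      ∃ F : Finset G, ∀ h ∈ H, ∃ f ∈ F, f⁻¹ * h ∈ Z) :
    ∀ H : Subgroup G, H ≤ commutator G → H.FG → Finite H := by
  classical
  intro H hle hfg
  obtain ⟨T, hT⟩ := hfg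
  -- each generator lies in the closure of finitely many commutators
  have htP : ∀ t ∈ T, ∃ P : Finset (G × G),
      t ∈ Subgroup.closure ((fun p : G × G => ⁅p.1, p.2⁆) '' ↑P) := by
    intro t htT
    have ht : t ∈ Subgroup.closure (commutatorSet G) := by
      rw [← commutator_eq_closure]
      exact hle (hT ▸ Subgroup.subset_closure htT)
    obtain ⟨F, hFsub, hF⟩ := exists_finset_closure ht
    choose a b hab using fun f : F => (hFsub f.2 : (f : G) ∈ commutatorSet G)
    refine ⟨F.attach.image (fun f => (a f, b f)), Subgroup.closure_mono ?_ hF⟩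
    intro g hg
    have hf : g ∈ F := hg
    refine ⟨(a ⟨g, hf⟩, b ⟨g, hf⟩), ?_, hab ⟨g, hf⟩⟩
    simp only [Finset.coe_image, Set.mem_image, Finset.mem_coe]
    exact ⟨⟨g, hf⟩, Finset.mem_attach _ _, rfl⟩
  choose P hP using htP
  set Pall : Finset (G × G) := T.attach.biUnion (fun t => P t t.2) with hPall
  set S : Finset G := Pall.image Prod.fst ∪ Pall.image Prod.snd with hS
  set K : Subgroup G := Subgroup.closure ↑S with hK
  have hKfg : K.FG := ⟨S, rfl⟩
  -- H is contained in the commutator subgroup of K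
  have hHK : H ≤ ⁅K, K⁆ := by
    rw [← hT, Subgroup.closure_le]
    intro t htT
    have := hP t htT
    refine Subgroup.closure_le (K := ⁅K, K⁆) |>.mpr ?_ this
    rintro g ⟨p, hp, rfl⟩
    have hp1 : p.1 ∈ K := Subgroup.subset_closure (by
      simp only [hS, Finset.coe_union, Set.mem_union, Finset.coe_image, Set.mem_image,
        Finset.mem_coe]
      exact Or.inl ⟨p, Finset.mem_biUnion.mpr ⟨⟨t, htT⟩, Finset.mem_attach _ _, hp⟩, rfl⟩)
    have hp2 : p.2 ∈ K := Subgroup.subset_closure (by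
      simp only [hS, Finset.coe_union, Set.mem_union, Finset.coe_image, Set.mem_image,
        Finset.mem_coe]
      exact Or.inr ⟨p, Finset.mem_biUnion.mpr ⟨⟨t, htT⟩, Finset.mem_attach _ _, hp⟩, rfl⟩)
    exact Subgroup.commutator_mem_commutator hp1 hp2
  -- K has finite quotient mod Z ⊓ K
  obtain ⟨F, hF⟩ := hquot K hKfg
  set Z' : Subgroup ↥K := Z.subgroupOf K with hZ'
  have hZ'c : Z' ≤ Subgroup.center ↥K := by
    intro z hz
    rw [Subgroup.mem_center_iff]
    intro g
    have := Subgroup.mem_center_iff.mp (hZ hz) (g : G)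
    exact Subtype.ext this
  have hcov : ∀ k : ↥K, ∃ f : F, (f : G)⁻¹ * k ∈ Z := by
    intro k
    obtain ⟨f, hfF, hf⟩ := hF k k.2
    exact ⟨⟨f, hfF⟩, hf⟩
  choose φ0 hφ0 using hcov
  haveI hQfin : Finite (↥K ⧸ Z') := by
    refine Finite.of_injective (fun q => φ0 q.out) ?_
    intro q1 q2 heq
    replace heq : φ0 q1.out = φ0 q2.out := heq
    have h1 := hφ0 q1.out
    have h2 := hφ0 q2.out
    rw [heq] at h1
    have hmem : ((q1.out : ↥K)⁻¹ * q2.out : G) ∈ Z := by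
      have : (((φ0 q2.out : G))⁻¹ * q1.out)⁻¹ * (((φ0 q2.out : G))⁻¹ * q2.out) ∈ Z :=
        mul_mem (inv_mem h1) h2
      convert this using 1
      push_cast
      group
    have : q1.out⁻¹ * q2.out ∈ Z' := by
      show q1.out⁻¹ * q2.out ∈ Z.subgroupOf K
      rw [Subgroup.mem_subgroupOf]
      exact_mod_cast hmem
    calc q1 = QuotientGroup.mk q1.out := (QuotientGroup.out_eq' q1).symm
      _ = QuotientGroup.mk q2.out := (QuotientGroup.eq ).mpr this
      _ = q2 := QuotientGroup.out_eq' q2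
  haveI : Finite (↥K ⧸ Subgroup.center ↥K) := by
    refine Finite.of_surjective
      (fun q : ↥K ⧸ Z' => (QuotientGroup.mk q.out : ↥K ⧸ Subgroup.center ↥K)) ?_
    intro x
    obtain ⟨k, rfl⟩ := QuotientGroup.mk_surjective x
    refine ⟨QuotientGroup.mk k, ?_⟩
    have hmem : ((QuotientGroup.mk k : ↥K ⧸ Z').out)⁻¹ * k ∈ Z' := by
      rw [← QuotientGroup.eq]
      simp [QuotientGroup.out_eq']
    exact QuotientGroup.eq.mpr (hZ'c hmem)
  haveI : Finite (commutatorSet ↥K) := finite_commutatorSet_of_finite_quotient_center ↥K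
  haveI hCfin : Finite (_root_.commutator ↥K) := inferInstance
  -- transfer finiteness to ⁅K, K⁆ ≤ G
  have hmap : Subgroup.map K.subtype (_root_.commutator ↥K) = ⁅K, K⁆ := by
    rw [commutator_def, Subgroup.map_commutator]
    congr 1 <;>
    · rw [← MonoidHom.range_eq_map, Subgroup.range_subtype]
  have hfinset : ((⁅K, K⁆ : Subgroup G) : Set G).Finite := by
    rw [← hmap, Subgroup.coe_map]
    exact Set.Finite.image _ (Set.toFinite _)
  exact Set.Finite.to_subtype (hfinset.subset hHK)
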